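/- Define f: ℝ → ℝ by f(x) = e^{-1/x} for x ∈ (0, 1/2], f(0) = 0, and f(x) = f(-x) for x ∈ [-1/2, 0). Then f is convex on [-1/2, 1/2], f⁻¹((-∞,0]) ∩ [-1/2,1/2] = {0}, and the Newton-type iteration x_{i+1} = x_i - f(x_i)/f'(x_i) = x_i - x_i² from any x_0 ∈ (0,1/2) produces a sequence converging to 0 with lim_{i→∞} |x_{i+1}|/|x_i| = 1 (so convergence is not linear). -/

import Mathlib

open Filter

/-- The example function `f(x) = e^{-1/|x|}` for `x ≠ 0`, `f(0) = 0`. -/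
noncomputable def exampleF (x : ℝ) : ℝ := if x = 0 then 0 else Real.exp (-1 / |x|)

lemma exampleF_of_pos {z : ℝ} (hz : 0 < z) : exampleF z = Real.exp (-1 / z) := by
  simp [exampleF, hz.ne', abs_of_pos hz]

lemma exampleF_abs (y : ℝ) : exampleF |y| = exampleF y := by
  rcases eq_or_ne y 0 with h | h
  · simp [h]
  · simp [exampleF, h, abs_ne_zero.2 h, abs_abs]

lemma hasDerivAt_exampleF {z : ℝ} (hz : 0 < z) :
    HasDerivAt exampleF (Real.exp (-z⁻¹) * (z ^ 2)⁻¹) z := by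
  have h1 : HasDerivAt (fun y : ℝ => -y⁻¹) ((z ^ 2)⁻¹) z := by
    simpa [Pi.neg_def] using (hasDerivAt_inv hz.ne').neg
  have h2 : HasDerivAt (fun y : ℝ => Real.exp (-y⁻¹)) (Real.exp (-z⁻¹) * (z ^ 2)⁻¹) z :=
    h1.exp
  refine h2.congr_of_eventuallyEq ?_
  filter_upwards [Ioi_mem_nhds hz] with y hy
  rw [exampleF_of_pos hy, neg_div, one_div]

lemma exampleF_deriv_eq {z : ℝ} (hz : 0 < z) :
    deriv exampleF z = Real.exp (-z⁻¹) * (z ^ 2)⁻¹ := (hasDerivAt_exampleF hz).deriv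

noncomputable def exG (y : ℝ) : ℝ := Real.exp (-y⁻¹) * (y ^ 2)⁻¹

lemma hasDerivAt_exG {z : ℝ} (hz : 0 < z) :
    HasDerivAt exG (Real.exp (-z⁻¹) * (z ^ 2)⁻¹ * (z ^ 2)⁻¹
      + Real.exp (-z⁻¹) * (-(2 * z ^ 1) / (z ^ 2) ^ 2)) z := by
  have h1 : HasDerivAt (fun y : ℝ => Real.exp (-y⁻¹)) (Real.exp (-z⁻¹) * (z ^ 2)⁻¹) z := by
    simpa using ((hasDerivAt_inv hz.ne').neg).exp
  have h2 : HasDerivAt (fun y : ℝ => ((y : ℝ) ^ 2)⁻¹) (-(2 * z ^ 1) / (z ^ 2) ^ 2) z :=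
    (hasDerivAt_pow 2 z).inv (pow_ne_zero 2 hz.ne')
  exact h1.mul h2

lemma deriv_exampleF_eqOn : Set.EqOn (deriv exampleF) exG (Set.Ioi 0) := fun z hz =>
  (exampleF_deriv_eq hz).trans rfl

lemma exampleF_tendsto_zero :
    Filter.Tendsto exampleF (nhdsWithin 0 (Set.Ioi 0)) (nhds 0) := by
  have h1 : Tendsto (fun y : ℝ => -y⁻¹) (nhdsWithin 0 (Set.Ioi 0)) atBot :=
    tendsto_neg_atTop_atBot.comp tendsto_inv_nhdsGT_zero
  have h2 : Tendsto (fun y : ℝ => Real.exp (-y⁻¹)) (nhdsWithin 0 (Set.Ioi 0)) (nhds 0) :=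
    Real.tendsto_exp_atBot.comp h1
  refine h2.congr' ?_
  filter_upwards [self_mem_nhdsWithin] with y hy
  rw [exampleF_of_pos hy, neg_div, one_div]

lemma exampleF_convexOn_right : ConvexOn ℝ (Set.Icc (0:ℝ) (1/2)) exampleF := by
  have hint : interior (Set.Icc (0:ℝ) (1/2)) = Set.Ioo 0 (1/2) := interior_Icc
  apply convexOn_of_deriv2_nonneg (convex_Icc _ _)
  · -- continuity
    intro z hz
    rcases eq_or_ne z 0 with rfl | hz0
    · have hsub : Set.Icc (0:ℝ) (1/2) ⊆ {0} ∪ Set.Ioi 0 := by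
        intro y hy
        rcases eq_or_lt_of_le hy.1 with h | h
        · exact Or.inl (by simp [← h])
        · exact Or.inr h
      have h0 : exampleF 0 = 0 := by simp [exampleF]
      unfold ContinuousWithinAt
      rw [h0]
      refine Tendsto.mono_left ?_ (nhdsWithin_mono _ hsub)
      rw [nhdsWithin_union, tendsto_sup]
      constructor
      · rw [nhdsWithin_singleton]
        have := tendsto_pure_nhds exampleF (0:ℝ)
        rwa [h0] at this
      · exact exampleF_tendsto_zero
    · have hzpos : 0 < z := lt_of_le_of_ne hz.1 (Ne.symm hz0)
      exact ((hasDerivAt_exampleF hzpos).continuousAt).continuousWithinAt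
  · intro z hz
    rw [hint] at hz
    exact ((hasDerivAt_exampleF hz.1).differentiableAt).differentiableWithinAt
  · intro z hz
    rw [hint] at hz
    have : DifferentiableAt ℝ (deriv exampleF) z := by
      refine (hasDerivAt_exG hz.1).differentiableAt.congr_of_eventuallyEq ?_
      exact Filter.eventuallyEq_of_mem (Ioi_mem_nhds hz.1) (fun y hy => (deriv_exampleF_eqOn hy).symm) |>.symm
    exact this.differentiableWithinAt
  · intro z hz
    rw [hint] at hz
    obtain ⟨hz1, hz2⟩ := hz
    have heq : deriv (deriv exampleF) z = deriv exG z :=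
      Filter.EventuallyEq.deriv_eq
        (Filter.eventuallyEq_of_mem (Ioi_mem_nhds hz1) deriv_exampleF_eqOn)
    have hd : deriv exG z = Real.exp (-z⁻¹) * (z ^ 2)⁻¹ * (z ^ 2)⁻¹
        + Real.exp (-z⁻¹) * (-(2 * z ^ 1) / (z ^ 2) ^ 2) := (hasDerivAt_exG hz1).deriv
    show 0 ≤ deriv^[2] exampleF z
    rw [Function.iterate_succ, Function.iterate_one, Function.comp_apply, heq, hd]
    have hexp : (0:ℝ) ≤ Real.exp (-z⁻¹) := (Real.exp_pos _).le
    have key : (0:ℝ) ≤ (z ^ 2)⁻¹ * (z ^ 2)⁻¹ + (-(2 * z ^ 1) / (z ^ 2) ^ 2) := by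
      have hrw : (z ^ 2)⁻¹ * (z ^ 2)⁻¹ + (-(2 * z ^ 1) / (z ^ 2) ^ 2) = (1 - 2 * z) / z ^ 4 := by
        field_simp
        ring
      rw [hrw]
      exact div_nonneg (by linarith) (by positivity)
    have hrw2 : Real.exp (-z⁻¹) * (z ^ 2)⁻¹ * (z ^ 2)⁻¹
        + Real.exp (-z⁻¹) * (-(2 * z ^ 1) / (z ^ 2) ^ 2)
        = Real.exp (-z⁻¹) * ((z ^ 2)⁻¹ * (z ^ 2)⁻¹ + (-(2 * z ^ 1) / (z ^ 2) ^ 2)) := by ring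
    rw [hrw2]
    exact mul_nonneg hexp key

lemma exampleF_monotoneOn : MonotoneOn exampleF (Set.Icc (0:ℝ) (1/2)) := by
  intro a ha b hb hab
  rcases eq_or_lt_of_le ha.1 with h | h
  · rcases eq_or_lt_of_le hb.1 with h' | h'
    · simp [← h, ← h']
    · rw [exampleF_of_pos h']
      simp [exampleF, ← h]
      positivity
  · have hb' : 0 < b := lt_of_lt_of_le h hab
    rw [exampleF_of_pos h, exampleF_of_pos hb']
    apply Real.exp_le_exp.2
    rw [neg_div, neg_div, neg_le_neg_iff, one_div, one_div]
    exact inv_anti₀ h hab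

lemma exampleF_convexOn : ConvexOn ℝ (Set.Icc (-(1/2) : ℝ) (1/2)) exampleF := by
  have himg : (fun y : ℝ => |y|) '' Set.Icc (-(1/2) : ℝ) (1/2) = Set.Icc (0:ℝ) (1/2) := by
    ext y
    constructor
    · rintro ⟨w, hw, rfl⟩
      exact ⟨abs_nonneg w, abs_le.2 ⟨hw.1, hw.2⟩⟩
    · intro hy
      exact ⟨y, ⟨by linarith [hy.1, hy.2], hy.2⟩, abs_of_nonneg hy.1⟩
  have habs : ConvexOn ℝ (Set.Icc (-(1/2) : ℝ) (1/2)) fun y : ℝ => |y| := by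
    have := convexOn_norm (convex_Icc (-(1/2) : ℝ) (1/2))
    exact this
  have hcomp : ConvexOn ℝ (Set.Icc (-(1/2) : ℝ) (1/2)) (exampleF ∘ fun y : ℝ => |y|) := by
    apply ConvexOn.comp _ habs
    · rw [himg]; exact exampleF_monotoneOn
    · rw [himg]; exact exampleF_convexOn_right
  have : (exampleF ∘ fun y : ℝ => |y|) = exampleF := funext fun y => exampleF_abs y
  rwa [this] at hcomp

/-- The condition `0 ∉ ∂f(x̄)` is essential: for `f(x) = e^{-1/|x|}` the
Newton-type iteration `x_{i+1} = x_i - f(x_i)/f'(x_i) = x_i - x_i²` converges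
to `0` but not linearly. -/
theorem no_linear_convergence_example
    (x : ℕ → ℝ) (hx0 : x 0 ∈ Set.Ioo (0:ℝ) (1/2))
    (hiter : ∀ i, x (i + 1) = x i - (x i) ^ 2) :
    ConvexOn ℝ (Set.Icc (-(1/2) : ℝ) (1/2)) exampleF ∧
    {z ∈ Set.Icc (-(1/2) : ℝ) (1/2) | exampleF z ≤ 0} = {0} ∧
    (∀ z ∈ Set.Ioo (0:ℝ) (1/2), exampleF z / deriv exampleF z = z ^ 2) ∧
    Tendsto x atTop (nhds 0) ∧
    Tendsto (fun i => |x (i + 1)| / |x i|) atTop (nhds 1) := by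
  have hmem : ∀ i, x i ∈ Set.Ioo (0:ℝ) (1/2) := by
    intro i
    induction i with
    | zero => exact hx0
    | succ n ih =>
      rw [hiter n]
      obtain ⟨h1, h2⟩ := ih
      constructor
      · nlinarith
      · nlinarith
  have htend : Tendsto x atTop (nhds 0) := by
    have hanti : Antitone x := by
      apply antitone_nat_of_succ_le
      intro n
      rw [hiter n]
      nlinarith [(hmem n).1]
    have hbdd : BddBelow (Set.range x) := ⟨0, by rintro _ ⟨i, rfl⟩; exact (hmem i).1.le⟩
    have hL : Tendsto x atTop (nhds (⨅ i, x i)) := tendsto_atTop_ciInf hanti hbdd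
    set L := ⨅ i, x i with hLdef
    have h1 : Tendsto (fun i => x (i + 1)) atTop (nhds L) :=
      hL.comp (tendsto_add_atTop_nat 1)
    have h2 : Tendsto (fun i => x i - x i ^ 2) atTop (nhds (L - L ^ 2)) :=
      hL.sub (hL.pow 2)
    have h3 : Tendsto (fun i => x (i + 1)) atTop (nhds (L - L ^ 2)) := by
      refine h2.congr fun i => (hiter i).symm
    have hLL : L = L - L ^ 2 := tendsto_nhds_unique h1 h3
    have : L ^ 2 = 0 := by linarith
    have hL0 : L = 0 := by
      have := pow_eq_zero_iff (n := 2) (by norm_num) |>.1 this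
      exact this
    rwa [hL0] at hL
  refine ⟨exampleF_convexOn, ?_, ?_, htend, ?_⟩
  · ext z
    simp only [Set.mem_setOf_eq, Set.mem_singleton_iff]
    constructor
    · rintro ⟨hz, hle⟩
      by_contra h
      have : 0 < exampleF z := by
        simp only [exampleF, if_neg h]
        positivity
      linarith
    · rintro rfl
      refine ⟨⟨by norm_num, by norm_num⟩, by simp [exampleF]⟩
  · intro z hz
    rw [exampleF_deriv_eq hz.1, exampleF_of_pos hz.1, neg_div, one_div]
    have h1 : Real.exp (-z⁻¹) ≠ 0 := Real.exp_ne_zero _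
    have h2 : z ≠ 0 := hz.1.ne'
    field_simp
  · have : ∀ i, |x (i + 1)| / |x i| = 1 - x i := by
      intro i
      have h1 := (hmem i).1
      have h2 := (hmem (i + 1)).1
      rw [abs_of_pos h2, abs_of_pos h1, hiter i]
      field_simp
    refine (Tendsto.congr (fun i => (this i).symm)) ?_
    have : Tendsto (fun i => 1 - x i) atTop (nhds (1 - 0)) :=
      tendsto_const_nhds.sub htend
    simpa using this
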